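/- Let g ≥ 2 be an even integer and let q̄ be the largest prime factor of g. Then, as k → ∞, the real-valued ratio n_{g,1}(p_k#)/n_{2,1}(p_k#) converges to T_g(q̄#)/n_{2,1}(q̄#), the sum of the initial ratios of driving-term counts at the stage q̄ of Eratosthenes sieve. -/

import Mathlib

/-- `nGaps N g j` is the number of driving terms of length `j` for the gap `g`
in the cycle of gaps of `N`. -/
def nGaps (N g j : ℕ) : ℕ :=
  ((Finset.Icc 1 N).filter (fun a =>
    Nat.gcd a N = 1 ∧ Nat.gcd (a + g) N = 1 ∧
      ((Finset.Ioo a (a + g)).filter (fun b => Nat.gcd b N = 1)).card = j - 1)).card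

/-- `totalDT N g` is the total number of driving terms for the gap `g` of all lengths
in the cycle of gaps of `N`. -/
def totalDT (N g : ℕ) : ℕ :=
  ((Finset.Icc 1 N).filter (fun a => Nat.gcd a N = 1 ∧ Nat.gcd (a + g) N = 1)).card

/-- `nthPrime k` is the `k`-th prime, with `nthPrime 1 = 2`. -/
noncomputable def nthPrime (k : ℕ) : ℕ := Nat.nth Nat.Prime (k - 1)

open Finset Filter


/-- count of `a ∈ [1,N]` with `a+f` coprime to `N` for all `f ∈ F`. -/
def cnt (F : Finset ℕ) (N : ℕ) : ℕ :=
  ((Finset.Icc 1 N).filter (fun a => ∀ f ∈ F, Nat.gcd (a + f) N = 1)).card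

noncomputable def zcnt (F : Finset ℕ) (N : ℕ) : ℕ :=
  Nat.card {x : ZMod N // ∀ f ∈ F, IsUnit (x + (f : ZMod N))}

lemma gcd_add_left_self (f N : ℕ) : Nat.gcd (N + f) N = Nat.gcd f N := by
  simp [Nat.add_comm, Nat.gcd_comm, Nat.gcd_add_self_left]

lemma cnt_eq_zcnt (F : Finset ℕ) {N : ℕ} (hN : N ≠ 0) : cnt F N = zcnt F N := by
  classical
  haveI : NeZero N := ⟨hN⟩
  have h1 : (Finset.Icc 1 N) = insert N (Ico 1 N) := (Finset.Ico_insert_right (Nat.one_le_iff_ne_zero.2 hN)).symm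
  have h2 : range N = insert 0 (Ico 1 N) := by
    rw [range_eq_Ico]
    exact (Finset.insert_Ico_add_one_left_eq_Ico (Nat.pos_of_ne_zero hN)).symm
  set P : ℕ → Prop := fun a => ∀ f ∈ F, Nat.gcd (a + f) N = 1 with hPdef
  have hP : P N ↔ P 0 := by
    constructor <;> intro h f hf <;> have := h f hf
    · rwa [gcd_add_left_self, ← Nat.zero_add f] at this
    · rw [gcd_add_left_self]; rwa [Nat.zero_add] at this

  have step1 : cnt F N = ((range N).filter P).card := by
    unfold cnt
    rw [h1, h2, filter_insert, filter_insert]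
    by_cases hp : P N
    · rw [if_pos hp, if_pos (hP.1 hp), card_insert_of_notMem, card_insert_of_notMem]
      · simp
      · simp
    · rw [if_neg hp, if_neg (fun h0 => hp (hP.2 h0))]
  rw [step1]
  -- now bijection with ZMod N
  unfold zcnt
  rw [← Nat.card_eq_finsetCard]
  apply Nat.card_congr
  refine Equiv.symm ⟨fun x => ⟨(x : ZMod N).val, ?_⟩, fun b => ⟨((b : ℕ) : ZMod N), ?_⟩, ?_, ?_⟩
  · rcases x with ⟨x, hx⟩
    simp only [mem_coe, mem_filter, mem_range]
    refine ⟨ZMod.val_lt x, fun f hf => ?_⟩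
    have := hx f hf
    rw [← ZMod.natCast_rightInverse x, ← Nat.cast_add, ZMod.isUnit_iff_coprime] at this
    exact this
  · rcases b with ⟨b, hb⟩
    simp only [mem_coe, mem_filter, mem_range] at hb
    intro f hf
    rw [← Nat.cast_add, ZMod.isUnit_iff_coprime]
    exact hb.2 f hf
  · intro x
    ext
    exact ZMod.natCast_rightInverse x.1
  · intro b
    ext
    exact ZMod.val_cast_of_lt (by simpa using (mem_filter.1 b.2).1)


lemma prod_isUnit {M N : Type*} [Monoid M] [Monoid N] {x : M × N} :
    IsUnit x ↔ IsUnit x.1 ∧ IsUnit x.2 := by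
  constructor
  · intro h; exact ⟨h.map (MonoidHom.fst M N), h.map (MonoidHom.snd M N)⟩
  · rintro ⟨⟨u, hu⟩, ⟨v, hv⟩⟩
    exact ⟨⟨(u.val, v.val), (u.inv, v.inv), by ext <;> simp [u.val_inv, v.val_inv],
      by ext <;> simp [u.inv_val, v.inv_val]⟩, by ext <;> simp [hu, hv]⟩

lemma zcnt_mul (F : Finset ℕ) {m n : ℕ} (hm : m ≠ 0) (hn : n ≠ 0) (h : Nat.Coprime m n) :
    zcnt F (m * n) = zcnt F m * zcnt F n := by
  haveI : NeZero m := ⟨hm⟩; haveI : NeZero n := ⟨hn⟩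
  let e := ZMod.chineseRemainder h
  unfold zcnt
  rw [← Nat.card_prod]
  apply Nat.card_congr
  refine (e.toEquiv.subtypeEquiv ?_).trans Equiv.subtypeProdEquivProd
  intro x
  have key : ∀ f : ℕ, IsUnit (x + (f : ZMod (m * n))) ↔
      IsUnit ((e x).1 + (f : ZMod m)) ∧ IsUnit ((e x).2 + (f : ZMod n)) := by
    intro f
    have h1 : e (x + (f : ZMod (m * n))) = ((e x).1 + (f : ZMod m), (e x).2 + (f : ZMod n)) := by
      rw [map_add, map_natCast]
      ext <;> simp
    have h2 : IsUnit (x + (f : ZMod (m * n))) ↔ IsUnit (e (x + (f : ZMod (m * n)))) := by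
      constructor
      · intro hu; exact hu.map e.toRingHom
      · intro hu
        have := hu.map e.symm.toRingHom
        simpa using this
    rw [h2, h1, prod_isUnit]
  constructor
  · intro hx
    constructor <;> intro f hf
    · exact ((key f).1 (hx f hf)).1
    · exact ((key f).1 (hx f hf)).2
  · rintro ⟨h1, h2⟩ f hf
    exact (key f).2 ⟨h1 f hf, h2 f hf⟩

/-- number of distinct residues of `F` mod `p`. -/
noncomputable def omegaF (F : Finset ℕ) (p : ℕ) : ℕ :=
  (F.image (fun f : ℕ => ((f : ZMod p)))).card

lemma zcnt_prime (F : Finset ℕ) {p : ℕ} (hp : p.Prime) :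
    zcnt F p = p - omegaF F p := by
  haveI : Fact p.Prime := ⟨hp⟩
  unfold zcnt
  rw [Nat.card_eq_fintype_card, Fintype.card_subtype]
  have : (univ.filter (fun x : ZMod p => ∀ f ∈ F, IsUnit (x + (f : ZMod p)))) =
      univ \ (F.image (fun f : ℕ => (-(f : ZMod p)))) := by
    ext x
    simp only [mem_filter, mem_univ, true_and, Finset.mem_sdiff, mem_image, not_exists]
    constructor
    · rintro hx f ⟨hf, hfx⟩
      have := hx f hf
      rw [← hfx] at this
      simp at this
    · intro hx f hf
      rw [isUnit_iff_ne_zero]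
      intro h0
      exact hx f ⟨hf, by linear_combination (norm := ring_nf) -h0⟩
  rw [this, card_sdiff_of_subset (subset_univ _), card_univ, ZMod.card]
  congr 1
  unfold omegaF
  have : (F.image (fun f : ℕ => (-(f : ZMod p)))) = (F.image (fun f : ℕ => ((f : ZMod p)))).image Neg.neg := by
    rw [image_image]; rfl
  rw [this, card_image_of_injective _ neg_injective]


lemma zcnt_one (F : Finset ℕ) : zcnt F 1 = 1 := by
  unfold zcnt
  have : ∀ x : ZMod 1, ∀ f ∈ F, IsUnit (x + (f : ZMod 1)) := by
    intro x f _
    rw [Subsingleton.elim (x + (f : ZMod 1)) 1]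
    exact isUnit_one
  rw [Nat.card_congr (Equiv.subtypeUnivEquiv (fun x => this x))]
  simp [Nat.card_eq_fintype_card]

lemma zcnt_prod_primes (F : Finset ℕ) (s : Finset ℕ) (hs : ∀ p ∈ s, p.Prime) :
    zcnt F (∏ p ∈ s, p) = ∏ p ∈ s, zcnt F p := by
  classical
  induction s using Finset.induction with
  | empty => simpa using zcnt_one F
  | @insert p s hp ih =>
    have hpp : p.Prime := hs p (mem_insert_self p s)
    have hs' : ∀ q ∈ s, q.Prime := fun q hq => hs q (mem_insert_of_mem hq)
    have hcop : Nat.Coprime p (∏ q ∈ s, q) := by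
      apply Nat.Coprime.prod_right
      intro q hq
      exact (Nat.coprime_primes hpp (hs' q hq)).2 (fun hpq => hp (hpq ▸ hq))
    rw [prod_insert hp, prod_insert hp, zcnt_mul F hpp.ne_zero
      (Finset.prod_ne_zero_iff.2 fun q hq => (hs' q hq).ne_zero) hcop, ih hs']

/-- the set of primes up to `q`. -/
def PS (q : ℕ) : Finset ℕ := (range (q + 1)).filter Nat.Prime

lemma primorial_eq (q : ℕ) : primorial q = ∏ p ∈ PS q, p := rfl

lemma primorial_ne_zero' (q : ℕ) : primorial q ≠ 0 := by
  rw [primorial_eq]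
  exact Finset.prod_ne_zero_iff.2 fun p hp => ((mem_filter.1 hp).2).ne_zero

lemma zcnt_primorial (F : Finset ℕ) (q : ℕ) :
    zcnt F (primorial q) = ∏ p ∈ PS q, (p - omegaF F p) := by
  rw [primorial_eq]
  rw [zcnt_prod_primes F (PS q) (fun p hp => (mem_filter.1 hp).2)]
  exact Finset.prod_congr rfl fun p hp => zcnt_prime F (mem_filter.1 hp).2

-- omega computations
lemma omegaF_02_two : omegaF {0, 2} 2 = 1 := by
  unfold omegaF
  have : ((2:ℕ) : ZMod 2) = ((0:ℕ) : ZMod 2) := by decide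
  rw [image_insert, image_singleton, this]
  simp

lemma omegaF_pair_le (g p : ℕ) : omegaF {0, g} p ≤ 2 :=
  le_trans (card_image_le) (le_trans (card_insert_le _ _) (by simp))

lemma omegaF_pair_of_not_dvd {g p : ℕ} (hp : p.Prime) (h : ¬ p ∣ g) : omegaF {0, g} p = 2 := by
  unfold omegaF
  rw [image_insert, image_singleton]
  rw [card_insert_of_notMem, card_singleton]
  simp only [mem_singleton, Nat.cast_zero]
  intro h0
  exact h ((ZMod.natCast_eq_zero_iff g p).1 h0.symm)

lemma omegaF_pair_of_dvd {g p : ℕ} (h : p ∣ g) : omegaF {0, g} p = 1 := by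
  unfold omegaF
  rw [image_insert, image_singleton]
  have : ((g:ℕ) : ZMod p) = 0 := (ZMod.natCast_eq_zero_iff g p).2 h
  rw [this]
  simp

lemma omegaF_02 {p : ℕ} (hp : p.Prime) (hodd : p ≠ 2) : omegaF {0, 2} p = 2 :=
  omegaF_pair_of_not_dvd hp (fun h => hodd ((Nat.prime_dvd_prime_iff_eq hp Nat.prime_two).1 h))

lemma omegaF_triple {s g p : ℕ} (hp : p.Prime) (hs : 0 < s) (hsg : s < g) (hgp : g < p) :
    omegaF {0, s, g} p = 3 := by
  unfold omegaF
  have hinj : ∀ a b : ℕ, a < p → b < p → ((a : ZMod p) = (b : ZMod p)) → a = b := by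
    intro a b ha hb hab
    haveI : NeZero p := ⟨hp.ne_zero⟩
    have := congrArg ZMod.val hab
    rwa [ZMod.val_cast_of_lt ha, ZMod.val_cast_of_lt hb] at this
  rw [image_insert, image_insert, image_singleton]
  rw [card_insert_of_notMem, card_insert_of_notMem, card_singleton]
  · simp only [mem_singleton]
    intro h
    exact absurd (hinj s g (lt_trans hsg hgp) hgp h) (Nat.ne_of_lt hsg)
  · simp only [mem_insert, mem_singleton, Nat.cast_zero]
    push_neg
    constructor
    · intro h
      exact absurd (hinj 0 s (lt_of_le_of_lt (Nat.zero_le _) hgp) (lt_trans hsg hgp) (by exact_mod_cast h)).symm (Nat.pos_iff_ne_zero.1 hs)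
    · intro h
      exact absurd (hinj 0 g (lt_of_le_of_lt (Nat.zero_le _) hgp) hgp (by exact_mod_cast h)).symm (Nat.pos_iff_ne_zero.1 (lt_trans hs hsg))

lemma omegaF_le_card (F : Finset ℕ) (p : ℕ) : omegaF F p ≤ F.card := card_image_le

lemma w2_pos {p : ℕ} (hp : p.Prime) : 1 ≤ p - omegaF {0, 2} p := by
  by_cases h2 : p = 2
  · subst h2; rw [omegaF_02_two]
  · have := hp.two_le
    have h3 : 3 ≤ p := by
      rcases Nat.lt_or_ge p 3 with h | h
      · interval_cases p <;> simp_all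
      · exact h
    rw [omegaF_02 hp h2]; omega


lemma totalDT_eq_cnt (N g : ℕ) (hg : g ≠ 0) : totalDT N g = cnt {0, g} N := by
  unfold totalDT cnt
  congr 1
  apply filter_congr
  intro a _
  simp only [mem_insert, mem_singleton, forall_eq_or_imp, forall_eq, Nat.add_zero]

lemma Ioo_self_two (a : ℕ) : Finset.Ioo a (a + 2) = {a + 1} := by
  ext b
  simp only [mem_Ioo, mem_singleton]
  omega

lemma nGaps_two_eq_cnt (N : ℕ) (h2 : 2 ∣ N) : nGaps N 2 1 = cnt {0, 2} N := by
  unfold nGaps cnt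
  congr 1
  apply filter_congr
  intro a _
  simp only [mem_insert, mem_singleton, forall_eq_or_imp, forall_eq, Nat.add_zero]
  constructor
  · rintro ⟨h1, hG, _⟩; exact ⟨h1, hG⟩
  · rintro ⟨h1, hG⟩
    refine ⟨h1, hG, ?_⟩
    rw [Ioo_self_two]
    simp only [Nat.reduceSubDiff]
    rw [filter_singleton]
    rw [if_neg, card_empty]
    intro hc
    -- a is coprime to N, 2 ∣ N so a is odd, so 2 ∣ a + 1, contradicting gcd (a+1) N = 1
    have h2a : ¬ 2 ∣ a := by
      intro hd
      have : (2:ℕ) ∣ Nat.gcd a N := Nat.dvd_gcd hd h2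
      rw [h1] at this
      omega
    have : (2:ℕ) ∣ a + 1 := by omega
    have : (2:ℕ) ∣ Nat.gcd (a+1) N := Nat.dvd_gcd this h2
    rw [hc] at this
    omega

lemma nGaps_le_totalDT (N g : ℕ) : nGaps N g 1 ≤ totalDT N g := by
  apply card_le_card
  intro a ha
  rw [mem_filter] at ha ⊢
  exact ⟨ha.1, ha.2.1, ha.2.2.1⟩

lemma totalDT_le (N g : ℕ) :
    totalDT N g ≤ nGaps N g 1 + ∑ s ∈ Finset.Ioo 0 g, cnt {0, s, g} N := by
  classical
  unfold totalDT nGaps cnt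
  set Tf := (Finset.Icc 1 N).filter (fun a => Nat.gcd a N = 1 ∧ Nat.gcd (a + g) N = 1) with hTf
  set nf := (Finset.Icc 1 N).filter (fun a =>
    Nat.gcd a N = 1 ∧ Nat.gcd (a + g) N = 1 ∧
      ((Finset.Ioo a (a + g)).filter (fun b => Nat.gcd b N = 1)).card = 1 - 1) with hnf
  set Cf := fun s => (Finset.Icc 1 N).filter (fun a => ∀ f ∈ ({0, s, g} : Finset ℕ), Nat.gcd (a + f) N = 1) with hCf
  have hsub : Tf ⊆ nf ∪ (Finset.Ioo 0 g).biUnion Cf := by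
    intro a ha
    rw [hTf, mem_filter] at ha
    obtain ⟨haI, h1, hg'⟩ := ha
    by_cases hc : ((Finset.Ioo a (a + g)).filter (fun b => Nat.gcd b N = 1)).card = 0
    · apply mem_union_left
      rw [hnf, mem_filter]
      exact ⟨haI, h1, hg', by simpa using hc⟩
    · apply mem_union_right
      obtain ⟨b, hb⟩ := Finset.card_pos.1 (Nat.pos_of_ne_zero hc)
      rw [mem_filter, mem_Ioo] at hb
      obtain ⟨⟨hab, hbg⟩, hbN⟩ := hb
      rw [mem_biUnion]
      refine ⟨b - a, ?_, ?_⟩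
      · rw [mem_Ioo]; omega
      · rw [hCf, @Finset.mem_filter _ _ (fun _ => Classical.propDecidable _)]
        refine ⟨haI, ?_⟩
        intro f hf
        simp only [mem_insert, mem_singleton] at hf
        rcases hf with rfl | rfl | rfl
        · simpa using h1
        · have : a + (b - a) = b := by omega
          rw [this]; exact hbN
        · exact hg'
  calc Tf.card ≤ (nf ∪ (Finset.Ioo 0 g).biUnion Cf).card := card_le_card hsub
    _ ≤ nf.card + ((Finset.Ioo 0 g).biUnion Cf).card := card_union_le _ _
    _ ≤ nf.card + ∑ s ∈ Finset.Ioo 0 g, (Cf s).card := by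
        exact Nat.add_le_add_left (card_biUnion_le) _
  exact le_of_eq (by rw [hCf]; congr!)


lemma nthPrime_tendsto : Tendsto nthPrime atTop atTop := by
  have h1 : Tendsto (fun k : ℕ => k - 1) atTop atTop :=
    tendsto_atTop_atTop.2 (fun b => ⟨b + 1, fun a ha => by omega⟩)
  exact ((Nat.nth_strictMono Nat.infinite_setOf_prime).tendsto_atTop).comp h1

lemma primes_sum_tendsto :
    Tendsto (fun n : ℕ => ∑ p ∈ (range n).filter Nat.Prime, (1 : ℝ) / p) atTop atTop := by
  classical
  have hnonneg : ∀ n : ℕ, 0 ≤ Set.indicator {p : ℕ | p.Prime} (fun n : ℕ => (1:ℝ)/n) n :=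
    fun n => Set.indicator_nonneg (fun p _ => by positivity) n
  have hns := (not_summable_iff_tendsto_nat_atTop_of_nonneg hnonneg).1 not_summable_one_div_on_primes
  have heq : (fun n : ℕ => ∑ i ∈ range n, Set.indicator {p : ℕ | p.Prime} (fun m : ℕ => (1:ℝ)/m) i)
      = (fun n : ℕ => ∑ p ∈ (range n).filter Nat.Prime, (1 : ℝ) / p) := by
    funext n
    rw [Finset.sum_indicator_eq_sum_filter]
    apply Finset.sum_congr
    · apply Finset.filter_congr
      intro x _
      simp [Set.mem_setOf_eq]
    · intros; rfl
  rwa [heq] at hns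

lemma Pk_tendsto_zero (g : ℕ) (hg : 2 ≤ g) :
    Tendsto (fun k : ℕ => ∏ p ∈ (PS (nthPrime k)).filter (fun p => g < p),
      (((p:ℝ) - 3) / ((p:ℝ) - 2))) atTop (nhds 0) := by
  classical
  set L : ℕ → Finset ℕ := fun k => (PS (nthPrime k)).filter (fun p => g < p) with hL
  set P : ℕ → ℝ := fun k => ∏ p ∈ L k, (((p:ℝ) - 3) / ((p:ℝ) - 2)) with hP
  set W : ℕ → ℝ := fun k => ∑ p ∈ L k, (1:ℝ)/p with hW
  have hfacts : ∀ k, ∀ p ∈ L k, 3 ≤ p := by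
    intro k p hp
    rw [hL, mem_filter] at hp
    omega
  have hnonneg : ∀ k, 0 ≤ P k := by
    intro k
    apply Finset.prod_nonneg
    intro p hp
    have : (3:ℝ) ≤ (p:ℝ) := by exact_mod_cast hfacts k p hp
    apply div_nonneg <;> linarith
  have hbound : ∀ k, P k ≤ Real.exp (-(W k)) := by
    intro k
    have : Real.exp (-(W k)) = ∏ p ∈ L k, Real.exp (-(1/(p:ℝ))) := by
      rw [hW, ← Real.exp_sum]
      congr 1
      rw [← Finset.sum_neg_distrib]
    rw [this]
    apply Finset.prod_le_prod
    · intro p hp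
      have : (3:ℝ) ≤ (p:ℝ) := by exact_mod_cast hfacts k p hp
      apply div_nonneg <;> linarith
    · intro p hp
      have h3 : (3:ℝ) ≤ (p:ℝ) := by exact_mod_cast hfacts k p hp
      have hp2 : (0:ℝ) < (p:ℝ) - 2 := by linarith
      have hpp : (0:ℝ) < (p:ℝ) := by linarith
      have e1 : ((p:ℝ) - 3) / ((p:ℝ) - 2) = 1 - 1/((p:ℝ) - 2) := by
        rw [one_sub_div (ne_of_gt hp2)]
        ring_nf
      have e2 : 1 - 1/((p:ℝ) - 2) ≤ Real.exp (-(1/((p:ℝ) - 2))) := by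
        have := Real.add_one_le_exp (-(1/((p:ℝ) - 2)))
        linarith
      have e3 : Real.exp (-(1/((p:ℝ) - 2))) ≤ Real.exp (-(1/(p:ℝ))) := by
        apply Real.exp_le_exp.2
        have : 1/(p:ℝ) ≤ 1/((p:ℝ) - 2) := by
          apply one_div_le_one_div_of_le hp2
          linarith
        linarith
      rw [e1]
      exact le_trans e2 e3
  -- W tends to atTop
  have hQ : Tendsto (fun k : ℕ => ∑ p ∈ PS (nthPrime k), (1:ℝ)/p) atTop atTop := by
    have h1 : Tendsto (fun k : ℕ => nthPrime k + 1) atTop atTop :=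
      tendsto_atTop_mono (fun k => Nat.le_succ (nthPrime k)) nthPrime_tendsto
    exact primes_sum_tendsto.comp h1
  have hWlow : ∀ k, (∑ p ∈ PS (nthPrime k), (1:ℝ)/p) - ((g:ℝ) + 1) ≤ W k := by
    intro k
    have hsplit := Finset.sum_filter_add_sum_filter_not (PS (nthPrime k)) (fun p => g < p)
      (fun p => (1:ℝ)/p)
    have hrest : ∑ p ∈ (PS (nthPrime k)).filter (fun p => ¬ g < p), (1:ℝ)/p ≤ (g:ℝ) + 1 := by
      have hsub : (PS (nthPrime k)).filter (fun p => ¬ g < p) ⊆ range (g+1) := by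
        intro p hp
        rw [mem_filter] at hp
        rw [mem_range]
        omega
      calc ∑ p ∈ (PS (nthPrime k)).filter (fun p => ¬ g < p), (1:ℝ)/p
          ≤ ∑ _p ∈ (PS (nthPrime k)).filter (fun p => ¬ g < p), (1:ℝ) := by
            apply Finset.sum_le_sum
            intro p hp
            rcases Nat.eq_zero_or_pos p with h0 | h0
            · simp [h0]
            · rw [div_le_one (by exact_mod_cast h0)]
              exact_mod_cast h0
        _ = ((PS (nthPrime k)).filter (fun p => ¬ g < p)).card := by
            rw [Finset.sum_const, nsmul_eq_mul, mul_one]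
        _ ≤ ((g:ℝ) + 1) := by
            have := Finset.card_le_card hsub
            rw [Finset.card_range] at this
            exact_mod_cast this
    rw [hW]
    have : (∑ p ∈ L k, (1:ℝ)/p) = (∑ p ∈ PS (nthPrime k), (1:ℝ)/p)
        - ∑ p ∈ (PS (nthPrime k)).filter (fun p => ¬ g < p), (1:ℝ)/p := by
      rw [← hsplit, hL]
      ring
    show ∑ p ∈ PS (nthPrime k), (1:ℝ)/p - ((g:ℝ)+1) ≤ ∑ p ∈ L k, (1:ℝ)/p
    rw [this]
    linarith
  have hWtop : Tendsto W atTop atTop := by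
    apply tendsto_atTop_mono hWlow
    exact tendsto_atTop_add_const_right atTop (-((g:ℝ)+1)) hQ |>.congr (fun k => by ring)
  have hexp : Tendsto (fun k => Real.exp (-(W k))) atTop (nhds 0) :=
    Real.tendsto_exp_atBot.comp (tendsto_neg_atTop_atBot.comp hWtop)
  exact squeeze_zero hnonneg hbound hexp
lemma cnt_primorial (F : Finset ℕ) (q : ℕ) :
    cnt F (primorial q) = ∏ p ∈ PS q, (p - omegaF F p) := by
  rw [cnt_eq_zcnt F (primorial_ne_zero' q), zcnt_primorial]

lemma cnt2_pos (q : ℕ) : 0 < cnt {0, 2} (primorial q) := by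
  rw [cnt_primorial]
  exact Finset.prod_pos (fun p hp => w2_pos (mem_filter.1 hp).2)

lemma two_dvd_primorial {q : ℕ} (hq : 2 ≤ q) : 2 ∣ primorial q := by
  rw [primorial_eq]
  apply Finset.dvd_prod_of_mem
  rw [PS, mem_filter, mem_range]
  exact ⟨by omega, Nat.prime_two⟩

lemma cnt_ratio_const {g qbar n : ℕ} (hg2 : 2 ≤ g) (hq : qbar.Prime)
    (hmax : ∀ r : ℕ, r.Prime → r ∣ g → r ≤ qbar) (hqn : qbar ≤ n) :
    (cnt {0, g} (primorial n) : ℝ) / (cnt {0, 2} (primorial n) : ℝ)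
      = (cnt {0, g} (primorial qbar) : ℝ) / (cnt {0, 2} (primorial qbar) : ℝ) := by
  have hsub : PS qbar ⊆ PS n := by
    intro p hp
    rw [PS, mem_filter, mem_range] at hp ⊢
    exact ⟨by omega, hp.2⟩
  have hDg : ∀ p ∈ PS n \ PS qbar, p - omegaF {0, g} p = p - omegaF {0, 2} p := by
    intro p hp
    rw [Finset.mem_sdiff] at hp
    have hpp : p.Prime := (mem_filter.1 hp.1).2
    have hplt : qbar < p := by
      by_contra hle
      push_neg at hle
      exact hp.2 (by rw [PS, mem_filter, mem_range]; exact ⟨by omega, hpp⟩)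
    have hndvd : ¬ p ∣ g := fun hd => absurd (hmax p hpp hd) (not_le.2 hplt)
    have hne2 : p ≠ 2 := by have := hq.two_le; omega
    rw [omegaF_pair_of_not_dvd hpp hndvd, omegaF_02 hpp hne2]
  have e1 : cnt {0, g} (primorial n)
      = (∏ p ∈ PS n \ PS qbar, (p - omegaF {0, 2} p)) * cnt {0, g} (primorial qbar) := by
    rw [cnt_primorial, cnt_primorial, ← Finset.prod_sdiff hsub]
    congr 1
    exact Finset.prod_congr rfl hDg
  have e2 : cnt {0, 2} (primorial n)
      = (∏ p ∈ PS n \ PS qbar, (p - omegaF {0, 2} p)) * cnt {0, 2} (primorial qbar) := by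
    rw [cnt_primorial, cnt_primorial, ← Finset.prod_sdiff hsub]
  have hD : 0 < ∏ p ∈ PS n \ PS qbar, (p - omegaF {0, 2} p) :=
    Finset.prod_pos (fun p hp => w2_pos (mem_filter.1 (mem_sdiff.1 hp).1).2)
  rw [e1, e2]
  push_cast
  rw [mul_div_mul_left]
  exact_mod_cast hD.ne'

lemma Cs_bound (g s n : ℕ) (hg2 : 2 ≤ g) (hs : 0 < s) (hsg : s < g) :
    (cnt {0, s, g} (primorial n) : ℝ) / (cnt {0, 2} (primorial n) : ℝ)
      ≤ (g:ℝ)^(g+1) * ∏ p ∈ (PS n).filter (fun p => g < p), (((p:ℝ)-3)/((p:ℝ)-2)) := by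
  classical
  set Lg := (PS n).filter (fun p => g < p) with hLg
  set Sm := (PS n).filter (fun p => ¬ g < p) with hSm
  have hLgprime : ∀ p ∈ Lg, p.Prime := fun p hp => (mem_filter.1 (mem_filter.1 hp).1).2
  have hLg3 : ∀ p ∈ Lg, 3 ≤ p := by
    intro p hp
    have := (mem_filter.1 hp).2
    omega
  -- numerator bound
  have hnum : cnt {0, s, g} (primorial n) ≤ g^(g+1) * ∏ p ∈ Lg, (p - 3) := by
    rw [cnt_primorial, ← Finset.prod_filter_mul_prod_filter_not (PS n) (fun p => g < p)]
    rw [mul_comm (g^(g+1))]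
    apply Nat.mul_le_mul
    · apply le_of_eq
      apply Finset.prod_congr rfl
      intro p hp
      rw [omegaF_triple (hLgprime p hp) hs hsg (mem_filter.1 hp).2]
    · calc ∏ p ∈ Sm, (p - omegaF {0, s, g} p) ≤ ∏ p ∈ Sm, g := by
            apply Finset.prod_le_prod'
            intro p hp
            have : p ≤ g := by
              have := (mem_filter.1 hp).2
              omega
            omega
        _ = g ^ Sm.card := by rw [Finset.prod_const]
        _ ≤ g^(g+1) := by
            apply Nat.pow_le_pow_right (by omega)
            have : Sm ⊆ range (g+1) := by
              intro p hp
              rw [mem_range]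
              have := (mem_filter.1 hp).2
              omega
            have := Finset.card_le_card this
            rwa [Finset.card_range] at this
  -- denominator bound
  have hden : ∏ p ∈ Lg, (p - 2) ≤ cnt {0, 2} (primorial n) := by
    rw [cnt_primorial, ← Finset.prod_filter_mul_prod_filter_not (PS n) (fun p => g < p)]
    have h1 : ∏ p ∈ Lg, (p - 2) = ∏ p ∈ Lg, (p - omegaF {0, 2} p) := by
      apply Finset.prod_congr rfl
      intro p hp
      rw [omegaF_02 (hLgprime p hp) (by have := hLg3 p hp; omega)]
    rw [h1]
    have h2 : 1 ≤ ∏ p ∈ Sm, (p - omegaF {0, 2} p) :=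
      Finset.one_le_prod' (fun p hp => w2_pos (mem_filter.1 (mem_filter.1 hp).1).2)
    calc ∏ p ∈ Lg, (p - omegaF {0, 2} p)
        = (∏ p ∈ Lg, (p - omegaF {0, 2} p)) * 1 := by ring
      _ ≤ (∏ p ∈ Lg, (p - omegaF {0, 2} p)) * ∏ p ∈ Sm, (p - omegaF {0, 2} p) :=
          Nat.mul_le_mul_left _ h2
  have hB2pos : 0 < ∏ p ∈ Lg, (p - 2) :=
    Finset.prod_pos (fun p hp => by have := hLg3 p hp; omega)
  have hcast3 : ((∏ p ∈ Lg, (p - 3) : ℕ) : ℝ) = ∏ p ∈ Lg, ((p:ℝ) - 3) := by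
    rw [Nat.cast_prod]
    apply Finset.prod_congr rfl
    intro p hp
    have := hLg3 p hp
    push_cast [Nat.cast_sub this]
    ring
  have hcast2 : ((∏ p ∈ Lg, (p - 2) : ℕ) : ℝ) = ∏ p ∈ Lg, ((p:ℝ) - 2) := by
    rw [Nat.cast_prod]
    apply Finset.prod_congr rfl
    intro p hp
    have h3 := hLg3 p hp
    have : 2 ≤ p := by omega
    push_cast [Nat.cast_sub this]
    ring
  calc (cnt {0, s, g} (primorial n) : ℝ) / (cnt {0, 2} (primorial n) : ℝ)
      ≤ ((g^(g+1) * ∏ p ∈ Lg, (p - 3) : ℕ) : ℝ) / ((∏ p ∈ Lg, (p - 2) : ℕ) : ℝ) := by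
        apply div_le_div₀ (by positivity) (by exact_mod_cast hnum) (by exact_mod_cast hB2pos)
          (by exact_mod_cast hden)
    _ = (g:ℝ)^(g+1) * ∏ p ∈ Lg, (((p:ℝ)-3)/((p:ℝ)-2)) := by
        rw [Finset.prod_div_distrib]
        push_cast [hcast3, hcast2]
        ring
theorem stmt_6 (g qbar : ℕ) (hg2 : 2 ≤ g) (hgeven : Even g)
    (hq : qbar.Prime) (hdvd : qbar ∣ g) (hmax : ∀ r : ℕ, r.Prime → r ∣ g → r ≤ qbar) :
    Filter.Tendsto (fun k : ℕ =>
        (nGaps (primorial (nthPrime k)) g 1 : ℝ) / (nGaps (primorial (nthPrime k)) 2 1 : ℝ))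
      Filter.atTop
      (nhds ((totalDT (primorial qbar) g : ℝ) / (nGaps (primorial qbar) 2 1 : ℝ))) := by
  classical
  have hq2 : 2 ≤ qbar := hq.two_le
  have hg0 : g ≠ 0 := by omega
  set Lval : ℝ := (totalDT (primorial qbar) g : ℝ) / (nGaps (primorial qbar) 2 1 : ℝ) with hLval
  have hdenq : nGaps (primorial qbar) 2 1 = cnt {0, 2} (primorial qbar) :=
    nGaps_two_eq_cnt _ (two_dvd_primorial hq2)
  have hnumq : totalDT (primorial qbar) g = cnt {0, g} (primorial qbar) :=
    totalDT_eq_cnt _ _ hg0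
  have hnth_prime : ∀ k, (nthPrime k).Prime :=
    fun k => Nat.nth_mem_of_infinite Nat.infinite_setOf_prime _
  have hdenk : ∀ k, nGaps (primorial (nthPrime k)) 2 1 = cnt {0, 2} (primorial (nthPrime k)) :=
    fun k => nGaps_two_eq_cnt _ (two_dvd_primorial (hnth_prime k).two_le)
  set P : ℕ → ℝ := fun k => ∏ p ∈ (PS (nthPrime k)).filter (fun p => g < p),
    (((p:ℝ)-3)/((p:ℝ)-2)) with hPdef
  have hPnonneg : ∀ k, 0 ≤ P k := by
    intro k
    apply Finset.prod_nonneg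
    intro p hp
    have h3 : (3:ℕ) ≤ p := by
      have := (mem_filter.1 hp).2
      omega
    have : (3:ℝ) ≤ (p:ℝ) := by exact_mod_cast h3
    apply div_nonneg <;> linarith
  have hPtend : Tendsto P atTop (nhds 0) := Pk_tendsto_zero g hg2
  have hlow : Tendsto (fun k => Lval - (g:ℝ)^(g+2) * P k) atTop (nhds Lval) := by
    have h1 := hPtend.const_mul ((g:ℝ)^(g+2))
    rw [mul_zero] at h1
    have h2 := (tendsto_const_nhds (x := Lval) (f := atTop (α := ℕ))).sub h1
    rw [sub_zero] at h2
    exact h2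
  apply tendsto_of_tendsto_of_tendsto_of_le_of_le' hlow tendsto_const_nhds
  · -- lower bound eventually
    filter_upwards [nthPrime_tendsto.eventually_gt_atTop (max g qbar)] with k hk
    set n := nthPrime k with hn
    have hqn : qbar ≤ n := le_of_lt (lt_of_le_of_lt (le_max_right _ _) hk)
    have hBpos : (0:ℝ) < (cnt {0, 2} (primorial n) : ℝ) := by exact_mod_cast cnt2_pos n
    have hconst : (cnt {0, g} (primorial n) : ℝ) / (cnt {0, 2} (primorial n) : ℝ) = Lval := by
      rw [cnt_ratio_const hg2 hq hmax hqn, hLval, hdenq, hnumq]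
    have hineq : cnt {0, g} (primorial n)
        ≤ nGaps (primorial n) g 1 + ∑ s ∈ Finset.Ioo 0 g, cnt {0, s, g} (primorial n) := by
      rw [← totalDT_eq_cnt _ _ hg0]
      exact totalDT_le _ _
    have h1 : (cnt {0, g} (primorial n) : ℝ)
        ≤ (nGaps (primorial n) g 1 : ℝ) + ∑ s ∈ Finset.Ioo 0 g, (cnt {0, s, g} (primorial n) : ℝ) := by
      exact_mod_cast hineq
    have hsumB : (∑ s ∈ Finset.Ioo 0 g, (cnt {0, s, g} (primorial n) : ℝ)) / (cnt {0, 2} (primorial n) : ℝ)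
        ≤ (g:ℝ)^(g+2) * P k := by
      rw [Finset.sum_div]
      calc ∑ s ∈ Finset.Ioo 0 g, (cnt {0, s, g} (primorial n) : ℝ) / (cnt {0, 2} (primorial n) : ℝ)
          ≤ ∑ _s ∈ Finset.Ioo 0 g, (g:ℝ)^(g+1) * P k := by
            apply Finset.sum_le_sum
            intro s hs
            rw [Finset.mem_Ioo] at hs
            exact Cs_bound g s n hg2 hs.1 hs.2
        _ = ((Finset.Ioo 0 g).card : ℝ) * ((g:ℝ)^(g+1) * P k) := by
            rw [Finset.sum_const, nsmul_eq_mul]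
        _ ≤ (g:ℝ) * ((g:ℝ)^(g+1) * P k) := by
            apply mul_le_mul_of_nonneg_right
            · rw [Nat.card_Ioo]
              have : g - 1 - 0 ≤ g := by omega
              exact_mod_cast Nat.cast_le.2 this
            · exact mul_nonneg (by positivity) (hPnonneg k)
        _ = (g:ℝ)^(g+2) * P k := by ring
    rw [hdenk k]
    rw [sub_le_iff_le_add, ← hconst]
    calc (cnt {0, g} (primorial n) : ℝ) / (cnt {0, 2} (primorial n) : ℝ)
        ≤ ((nGaps (primorial n) g 1 : ℝ) + ∑ s ∈ Finset.Ioo 0 g, (cnt {0, s, g} (primorial n) : ℝ))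
            / (cnt {0, 2} (primorial n) : ℝ) := by
          exact div_le_div₀ (add_nonneg (Nat.cast_nonneg _)
            (Finset.sum_nonneg fun s _ => Nat.cast_nonneg _)) h1 hBpos le_rfl
      _ = (nGaps (primorial n) g 1 : ℝ) / (cnt {0, 2} (primorial n) : ℝ)
            + (∑ s ∈ Finset.Ioo 0 g, (cnt {0, s, g} (primorial n) : ℝ)) / (cnt {0, 2} (primorial n) : ℝ) := by
          rw [add_div]
      _ ≤ (nGaps (primorial n) g 1 : ℝ) / (cnt {0, 2} (primorial n) : ℝ) + (g:ℝ)^(g+2) * P k := by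
          linarith [hsumB]
  · -- upper bound eventually
    filter_upwards [nthPrime_tendsto.eventually_gt_atTop (max g qbar)] with k hk
    set n := nthPrime k with hn
    have hqn : qbar ≤ n := le_of_lt (lt_of_le_of_lt (le_max_right _ _) hk)
    have hBpos : (0:ℝ) < (cnt {0, 2} (primorial n) : ℝ) := by exact_mod_cast cnt2_pos n
    have hconst : (cnt {0, g} (primorial n) : ℝ) / (cnt {0, 2} (primorial n) : ℝ) = Lval := by
      rw [cnt_ratio_const hg2 hq hmax hqn, hLval, hdenq, hnumq]
    rw [hdenk k, ← hconst, ← hn]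
    have hA : (nGaps (primorial n) g 1 : ℝ) ≤ (cnt {0, g} (primorial n) : ℝ) := by
      have := le_trans (nGaps_le_totalDT (primorial n) g) (le_of_eq (totalDT_eq_cnt _ _ hg0))
      exact_mod_cast this
    exact div_le_div₀ (Nat.cast_nonneg _) hA hBpos le_rfl
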